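/- Let e ≥ 1, let g be an odd integer, and fix an integer c. Then there is exactly one integer x with 1 ≤ x ≤ 2^e satisfying g^(x-1+c) ≡ x (mod 2^e). -/

import Mathlib

private lemma welch_two_pow_dvd_aux {g : ℤ} (hg : Odd g) (v : ℕ) :
    (2:ℤ)^(v+1) ∣ g^(2^v) - 1 := by
  induction v with
  | zero =>
    obtain ⟨k, hk⟩ := hg
    exact ⟨k, by rw [hk]; ring⟩
  | succ v ih =>
    have h1 : g^(2^(v+1)) - 1 = (g^(2^v) - 1) * (g^(2^v) + 1) := by
      rw [pow_succ, pow_mul]; ring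
    have h2 : (2:ℤ) ∣ g^(2^v) + 1 := by
      obtain ⟨k, hk⟩ := hg.pow (n := 2^v)
      exact ⟨k+1, by omega⟩
    rw [h1, pow_succ]
    exact mul_dvd_mul ih h2

private lemma welch_two_pow_dvd {g : ℤ} (hg : Odd g) {v m : ℕ} :
    (2:ℤ)^(v+1) ∣ g^(2^v*m) - 1 := by
  have h1 := welch_two_pow_dvd_aux hg v
  have h2 : g^(2^v*m) - 1 = (g^(2^v))^m - 1^m := by rw [pow_mul]; ring
  rw [h2]
  exact h1.trans (by simpa using sub_dvd_pow_sub_pow (g^(2^v)) 1 m)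

private lemma welch_key (e : ℕ) (he : 1 ≤ e) (g : ℤ) (hg : Odd g)
    (u : (ZMod (2^e))ˣ) (hu : (u : ZMod (2^e)) = (g : ZMod (2^e)))
    (d : ℤ) (w : (ZMod (2^e))ˣ)
    (h : (d : ZMod (2^e)) = (w : ZMod (2^e)) * (((u^d : (ZMod (2^e))ˣ) : ZMod (2^e)) - 1)) :
    (2:ℤ)^e ∣ d := by
  by_contra hd
  have hd0 : d ≠ 0 := by rintro rfl; exact hd (dvd_zero _)
  obtain ⟨v, m, hm, hnm⟩ :=
    Nat.exists_eq_pow_mul_and_not_dvd (Int.natAbs_ne_zero.mpr hd0) 2 (by norm_num)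
  have hdvd_absd : ((d.natAbs : ℤ)) ∣ d := Int.natAbs_dvd.mpr dvd_rfl
  have hve : v < e := by
    by_contra hve
    push_neg at hve
    apply hd
    have : (2:ℤ)^e ∣ (d.natAbs : ℤ) := by
      have : (2:ℕ)^e ∣ d.natAbs := hnm ▸ Dvd.dvd.mul_right (pow_dvd_pow 2 hve) m
      exact_mod_cast Int.natCast_dvd_natCast.mpr this
    exact this.trans hdvd_absd
  -- 2^(v+1) ∣ g^d.natAbs - 1
  have h2 : (2:ℤ)^(v+1) ∣ g ^ d.natAbs - 1 := by
    rw [hnm]; exact welch_two_pow_dvd hg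
  obtain ⟨k, hk⟩ := h2
  -- express (u^d - 1) as 2^(v+1) * t in ZMod (2^e)
  have hun : ((u ^ d.natAbs : (ZMod (2^e))ˣ) : ZMod (2^e)) - 1 = ((g ^ d.natAbs - 1 : ℤ) : ZMod (2^e)) := by
    push_cast
    rw [hu]
  obtain ⟨t, ht⟩ : ∃ t : ZMod (2^e),
      ((u^d : (ZMod (2^e))ˣ) : ZMod (2^e)) - 1 = 2^(v+1) * t := by
    rcases Int.natAbs_eq d with hcase | hcase
    · refine ⟨((k : ℤ) : ZMod (2^e)), ?_⟩
      rw [hcase, zpow_natCast, hun, hk]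
      push_cast; ring
    · refine ⟨-((u^d : (ZMod (2^e))ˣ) : ZMod (2^e)) * ((k : ℤ) : ZMod (2^e)), ?_⟩
      have hinv : ((u^d : (ZMod (2^e))ˣ) : ZMod (2^e)) * ((u ^ d.natAbs : (ZMod (2^e))ˣ) : ZMod (2^e)) = 1 := by
        rw [← Units.val_mul, ← zpow_natCast u d.natAbs, ← zpow_add, hcase]
        simp
      have : ((u^d : (ZMod (2^e))ˣ) : ZMod (2^e)) - 1
          = -((u^d : (ZMod (2^e))ˣ) : ZMod (2^e)) * (((u ^ d.natAbs : (ZMod (2^e))ˣ) : ZMod (2^e)) - 1) := by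
        rw [neg_mul, mul_sub, hinv, mul_one, neg_sub]
      rw [this, hun, hk]
      push_cast; ring
  -- so (d : ZMod (2^e)) = 2^(v+1) * s
  set s : ZMod (2^e) := (w : ZMod (2^e)) * t with hs
  have hds : (d : ZMod (2^e)) = 2^(v+1) * s := by
    rw [h, ht, hs]; ring
  -- lift to ℤ
  have hlift : ((d - 2^(v+1) * (s.val : ℤ) : ℤ) : ZMod (2^e)) = 0 := by
    push_cast
    rw [hds]
    haveI : NeZero (2^e) := ⟨pow_ne_zero e two_ne_zero⟩
    rw [ZMod.natCast_val, ZMod.cast_id]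
    ring
  rw [ZMod.intCast_zmod_eq_zero_iff_dvd] at hlift
  have hee : ((2^e : ℕ) : ℤ) = (2:ℤ)^e := by push_cast; ring
  rw [hee] at hlift
  have hdvd2 : (2:ℤ)^(v+1) ∣ d := by
    have h1 : (2:ℤ)^(v+1) ∣ d - 2^(v+1) * (s.val : ℤ) :=
      (pow_dvd_pow 2 hve).trans hlift
    have h2 : (2:ℤ)^(v+1) ∣ 2^(v+1) * (s.val : ℤ) := Dvd.intro _ rfl
    simpa using dvd_add h1 h2
  -- contradiction: d.natAbs = 2^v * m with m odd
  have hfin : (2:ℕ)^(v+1) ∣ d.natAbs := by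
    have h3 := Int.natAbs_dvd_natAbs.mpr hdvd2
    have h4 : ((2:ℤ)^(v+1)).natAbs = 2^(v+1) := by
      simp [Int.natAbs_pow]
    rwa [h4] at h3
  rw [hnm, pow_succ] at hfin
  have h5 : 2^v * 2 ∣ 2^v * m := hfin
  exact hm ((Nat.mul_dvd_mul_iff_left (Nat.pow_pos (by norm_num) : 0 < 2^v)).mp h5)

theorem welch_mod_two_unique_solution (e : ℕ) (he : 1 ≤ e) (g : ℤ) (hg : Odd g)
    (c : ℤ) (u : (ZMod (2 ^ e))ˣ) (hu : (u : ZMod (2 ^ e)) = (g : ZMod (2 ^ e))) :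
    ∃! x : ℤ, 1 ≤ x ∧ x ≤ 2 ^ e ∧
      (↑(u ^ (x - 1 + c)) : ZMod (2 ^ e)) = (x : ZMod (2 ^ e)) := by
  haveI : NeZero (2^e) := ⟨pow_ne_zero e two_ne_zero⟩
  have hee : ((2^e : ℕ) : ℤ) = (2:ℤ)^e := by push_cast; ring
  -- periodicity of zpow with period 2^e
  have hperiod : ∀ a b : ℤ, (2:ℤ)^e ∣ a - b → u ^ a = u ^ b := by
    intro a b hab
    have hcard : orderOf u ∣ 2^e := by
      have h1 : orderOf u ∣ Fintype.card (ZMod (2^e))ˣ := orderOf_dvd_card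
      rw [ZMod.card_units_eq_totient, Nat.totient_prime_pow Nat.prime_two (by omega)] at h1
      exact h1.trans (by simpa using pow_dvd_pow 2 (by omega : e - 1 ≤ e))
    have h2 : (orderOf u : ℤ) ∣ a - b :=
      (Int.natCast_dvd_natCast.mpr hcard).trans (by rw [hee]; exact hab)
    have h3 : u ^ (a - b) = 1 := orderOf_dvd_iff_zpow_eq_one.mp h2
    calc u ^ a = u ^ (b + (a - b)) := by ring_nf
    _ = u ^ b * u ^ (a - b) := zpow_add u b (a - b)
    _ = u ^ b := by rw [h3, mul_one]
  -- pairwise step: any two "solutions mod 2^e" agree mod 2^e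
  have hpair : ∀ x y : ℤ,
      (↑(u ^ (x - 1 + c)) : ZMod (2 ^ e)) = (x : ZMod (2 ^ e)) →
      (↑(u ^ (y - 1 + c)) : ZMod (2 ^ e)) = (y : ZMod (2 ^ e)) →
      (2:ℤ)^e ∣ x - y := by
    intro x y hx hy
    apply welch_key e he g hg u hu (x - y) (u ^ (y - 1 + c))
    have hxy : u ^ (x - 1 + c) = u ^ (y - 1 + c) * u ^ (x - y) := by
      rw [← zpow_add]; ring_nf
    have hz : ((x - y : ℤ) : ZMod (2^e)) = (↑(u ^ (x - 1 + c)) : ZMod (2 ^ e)) - ↑(u ^ (y - 1 + c)) := by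
      rw [Int.cast_sub, hx, hy]
    rw [hz, hxy, Units.val_mul, mul_sub, mul_one]
  -- the injective map
  set G : ZMod (2^e) → ZMod (2^e) :=
    fun z => z - ↑(u ^ ((z.val : ℤ) - 1 + c)) with hG
  have hGinj : Function.Injective G := by
    intro z1 z2 h12
    have hz1 : ((z1.val : ℕ) : ZMod (2^e)) = z1 := by rw [ZMod.natCast_val, ZMod.cast_id]
    have hz2 : ((z2.val : ℕ) : ZMod (2^e)) = z2 := by rw [ZMod.natCast_val, ZMod.cast_id]
    simp only [hG] at h12
    have hz : ((((z1.val : ℤ)) - (z2.val : ℤ) : ℤ) : ZMod (2^e))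
        = ↑(u ^ ((z1.val : ℤ) - 1 + c)) - ↑(u ^ ((z2.val : ℤ) - 1 + c)) := by
      push_cast
      rw [hz1, hz2]
      linear_combination h12
    have hd : (2:ℤ)^e ∣ (z1.val : ℤ) - (z2.val : ℤ) := by
      apply welch_key e he g hg u hu _ (u ^ ((z2.val : ℤ) - 1 + c))
      have hxy : u ^ ((z1.val : ℤ) - 1 + c)
          = u ^ ((z2.val : ℤ) - 1 + c) * u ^ ((z1.val:ℤ) - (z2.val:ℤ)) := by
        rw [← zpow_add]; ring_nf
      rw [hz, hxy, Units.val_mul, mul_sub, mul_one]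
    have hb1 : ((z1.val : ℤ)) < (2:ℤ)^e := by
      have := ZMod.val_lt z1; rw [← hee]; exact_mod_cast this
    have hb2 : ((z2.val : ℤ)) < (2:ℤ)^e := by
      have := ZMod.val_lt z2; rw [← hee]; exact_mod_cast this
    have hn1 : (0:ℤ) ≤ (z1.val : ℤ) := Int.natCast_nonneg _
    have hn2 : (0:ℤ) ≤ (z2.val : ℤ) := Int.natCast_nonneg _
    have hlt : |(z1.val : ℤ) - (z2.val : ℤ)| < (2:ℤ)^e := by
      rw [abs_lt]; constructor <;> linarith
    have h0 := Int.eq_zero_of_abs_lt_dvd hd hlt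
    have hval : z1.val = z2.val := by omega
    exact ZMod.val_injective _ hval
  have hGsurj : Function.Surjective G := Finite.injective_iff_surjective.mp hGinj
  obtain ⟨z, hz⟩ := hGsurj 0
  have hzfix : (↑(u ^ ((z.val : ℤ) - 1 + c)) : ZMod (2^e)) = z := by
    simp only [hG] at hz
    linear_combination -hz
  -- choose the representative in [1, 2^e]
  have hsolrep : ∃ x : ℤ, 1 ≤ x ∧ x ≤ 2^e ∧ (x : ZMod (2^e)) = z ∧ (2:ℤ)^e ∣ x - (z.val : ℤ) := by
    rcases eq_or_ne z.val 0 with h0 | h0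
    · refine ⟨(2:ℤ)^e, (one_le_pow₀ one_le_two : (1:ℤ) ≤ 2^e), le_refl _, ?_, ?_⟩
      · have hz0 : z = 0 := by
          have := (ZMod.val_eq_zero z).mp h0
          exact this
        rw [hz0, ← hee]
        exact_mod_cast ZMod.natCast_self (2^e)
      · rw [h0]; simp
    · refine ⟨(z.val : ℤ), by omega, ?_, ?_, by simp⟩
      · have := ZMod.val_lt z
        rw [← hee]; exact_mod_cast this.le
      · rw [show ((z.val : ℤ) : ZMod (2^e)) = ((z.val : ℕ) : ZMod (2^e)) by push_cast; ring,
          ZMod.natCast_val, ZMod.cast_id]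
  obtain ⟨x, hx1, hx2, hxz, hxdvd⟩ := hsolrep
  have hx3 : (↑(u ^ (x - 1 + c)) : ZMod (2 ^ e)) = (x : ZMod (2 ^ e)) := by
    have hper : u ^ (x - 1 + c) = u ^ ((z.val : ℤ) - 1 + c) := by
      apply hperiod
      have : x - 1 + c - ((z.val : ℤ) - 1 + c) = x - (z.val : ℤ) := by ring
      rw [this]; exact hxdvd
    rw [hper, hzfix, hxz]
  refine ⟨x, ⟨hx1, hx2, hx3⟩, ?_⟩
  rintro y ⟨hy1, hy2, hy3⟩
  have hd := hpair y x hy3 hx3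
  have hlt : |y - x| < (2:ℤ)^e := by
    rw [abs_lt]; constructor <;> linarith
  have h0 := Int.eq_zero_of_abs_lt_dvd hd hlt
  omega
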